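/- Let k ∈ ℕ and suppose ω_k^{k+2} is the union of disjoint sets A₀,...,A_{k+1} with A_i finite in the direction of the i-th axis. Then the map σ from (k+2)-element subsets of ω_k to (k+1)-element subsets, defined by σ(x) = x \ {x_i} where x (in increasing enumeration) lies in A_i, is finite-to-one and satisfies σ(x) ⊆ x; hence there is a (k+2)→(k+1) monotone compression scheme for the finite subsets of ω_k. -/

import Mathlib

theorem stmt_9 (k : ℕ)
    (A : Fin (k + 2) → Set (Fin (k + 2) → (Cardinal.aleph k).ord.ToType))
    (hcover : (⋃ i, A i) = Set.univ)
    (hdisj : Pairwise fun i j => Disjoint (A i) (A j))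
    (hfin : ∀ (i : Fin (k + 2)) (x : Fin (k + 2) → (Cardinal.aleph k).ord.ToType),
      {y ∈ A i | ∀ j ≠ i, y j = x j}.Finite) :
    ∃ σ : Finset (Cardinal.aleph k).ord.ToType → Finset (Cardinal.aleph k).ord.ToType,
      (∀ (s : Finset (Cardinal.aleph k).ord.ToType) (hs : s.card = k + 2),
        ∃ i : Fin (k + 2),
          (fun j => ((s.orderIsoOfFin hs) j : (Cardinal.aleph k).ord.ToType)) ∈ A i ∧
          σ s = s.erase ((s.orderIsoOfFin hs) i : (Cardinal.aleph k).ord.ToType)) ∧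
      (∀ s : Finset (Cardinal.aleph k).ord.ToType, s.card = k + 2 →
        σ s ⊆ s ∧ (σ s).card = k + 1) ∧
      ∀ B : Finset (Cardinal.aleph k).ord.ToType,
        {s : Finset (Cardinal.aleph k).ord.ToType | s.card = k + 2 ∧ σ s = B}.Finite := by
  classical
  have hex : ∀ (s : Finset (Cardinal.aleph k).ord.ToType) (hs : s.card = k + 2),
      ∃ i, (fun j => ((s.orderIsoOfFin hs) j : (Cardinal.aleph k).ord.ToType)) ∈ A i := by
    intro s hs
    have h1 : (fun j => ((s.orderIsoOfFin hs) j : (Cardinal.aleph k).ord.ToType)) ∈ Set.univ := Set.mem_univ _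
    rw [← hcover] at h1
    exact Set.mem_iUnion.mp h1
  choose idx hidx using hex
  refine ⟨fun s =>
    if hs : s.card = k + 2 then s.erase ((s.orderIsoOfFin hs) (idx s hs) : (Cardinal.aleph k).ord.ToType) else ∅,
    ?_, ?_, ?_⟩
  · intro s hs
    exact ⟨idx s hs, hidx s hs, dif_pos hs⟩
  · intro s hs
    simp only [dif_pos hs]
    refine ⟨Finset.erase_subset _ _, ?_⟩
    rw [Finset.card_erase_of_mem (Finset.coe_mem _), hs]
    omega
  · intro B
    by_cases hB : B.card = k + 1
    · -- the interesting case
      set g : Fin (k + 1) → (Cardinal.aleph k).ord.ToType := fun l => B.orderEmbOfFin hB l with hg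
      set x : Fin (k + 2) → Fin (k + 2) → (Cardinal.aleph k).ord.ToType := fun i j =>
        if h : ∃ l : Fin (k + 1), i.succAbove l = j then g h.choose else g 0 with hx
      have keyx : ∀ (i : Fin (k + 2)) (l : Fin (k + 1)), x i (i.succAbove l) = g l := by
        intro i l
        have h : ∃ l' : Fin (k + 1), i.succAbove l' = i.succAbove l := ⟨l, rfl⟩
        simp only [hx, dif_pos h]
        congr 1
        exact Fin.succAbove_right_injective h.choose_spec
      have hfinU : (⋃ i : Fin (k + 2),
          (fun y : Fin (k + 2) → (Cardinal.aleph k).ord.ToType => insert (y i) B) ''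
            {y ∈ A i | ∀ j ≠ i, y j = x i j}).Finite :=
        Set.finite_iUnion fun i => (hfin i (x i)).image _
      refine hfinU.subset ?_
      rintro s ⟨hs, hσ⟩
      simp only [dif_pos hs] at hσ
      set i := idx s hs with hi
      set y : Fin (k + 2) → (Cardinal.aleph k).ord.ToType := fun j => ((s.orderIsoOfFin hs) j : (Cardinal.aleph k).ord.ToType) with hy
      have hyemb : y = fun j => s.orderEmbOfFin hs j := by
        funext j; exact Finset.coe_orderIsoOfFin_apply s hs j
      have hyi : y i ∈ s := Finset.coe_mem _
      have hsB : s = insert (y i) B := by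
        rw [← hσ]; exact (Finset.insert_erase hyi).symm
      -- y composed with succAbove i is the enumeration of B
      have huniq : (fun l : Fin (k + 1) => y (i.succAbove l)) = g := by
        have hmem : ∀ l : Fin (k + 1), y (i.succAbove l) ∈ B := by
          intro l
          rw [← hσ, Finset.mem_erase]
          constructor
          · rw [hyemb]
            intro h
            exact Fin.succAbove_ne i l ((s.orderEmbOfFin hs).injective h)
          · rw [hyemb]; exact Finset.orderEmbOfFin_mem s hs _
        have hmono : StrictMono fun l : Fin (k + 1) => y (i.succAbove l) := by
          rw [hyemb]
          exact (s.orderEmbOfFin hs).strictMono.comp (Fin.strictMono_succAbove i)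
        exact Finset.orderEmbOfFin_unique hB hmem hmono
      refine Set.mem_iUnion.mpr ⟨i, ⟨y, ⟨hidx s hs, ?_⟩, hsB.symm⟩⟩
      intro j hj
      obtain ⟨l, rfl⟩ := Fin.exists_succAbove_eq hj
      rw [keyx i l, ← huniq]
    · -- fiber is empty
      have : {s : Finset (Cardinal.aleph k).ord.ToType | s.card = k + 2 ∧
          (if hs : s.card = k + 2 then s.erase ((s.orderIsoOfFin hs) (idx s hs) : (Cardinal.aleph k).ord.ToType)
            else ∅) = B} = ∅ := by
        ext s
        simp only [Set.mem_setOf_eq, Set.mem_empty_iff_false, iff_false, not_and]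
        intro hs hσ
        rw [dif_pos hs] at hσ
        apply hB
        rw [← hσ, Finset.card_erase_of_mem (Finset.coe_mem _), hs]
        omega
      rw [this]
      exact Set.finite_empty
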